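/- Clipped potential bound with multiplicity: let Z be a symmetric positive definite real d×d matrix, c > 0, x ∈ ℝ^d, and let N, H be integers with 1 ≤ N ≤ H. Then N·min(1, c·xᵀZ⁻¹x) ≤ 2H·log(det(Z + N·c·x xᵀ)/det(Z)). -/

import Mathlib

open Matrix

lemma half_le_log_two : (1:ℝ)/2 ≤ Real.log 2 := by
  rw [Real.le_log_iff_exp_le (by norm_num)]
  have h := Real.add_one_le_exp (-(1/2 : ℝ))
  have h2 : Real.exp (1/2) * Real.exp (-(1/2)) = 1 := by
    rw [← Real.exp_add]; norm_num
  nlinarith [Real.exp_pos ((1:ℝ)/2), Real.exp_pos (-(1/2:ℝ))]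

lemma le_two_log {t : ℝ} (h0 : 0 ≤ t) (h1 : t ≤ 1) : t ≤ 2 * Real.log (1 + t) := by
  have ht : Real.exp (t/2) ≤ 1 + t := by
    have hneg := Real.add_one_le_exp (-(t/2))
    have hmul : Real.exp (t/2) * Real.exp (-(t/2)) = 1 := by
      rw [← Real.exp_add]; norm_num
    nlinarith [Real.exp_pos (t/2), Real.exp_pos (-(t/2))]
  have := (Real.le_log_iff_exp_le (by linarith : (0:ℝ) < 1 + t)).2 ht
  linarith

lemma scalar_bound {u n h : ℝ} (hu : 0 ≤ u) (hn : 1 ≤ n) (hnh : n ≤ h) :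
    n * min 1 u ≤ 2 * h * Real.log (1 + n * u) := by
  set t := n * u with htdef
  have ht0 : 0 ≤ t := by positivity
  rcases le_or_gt t 1 with hcase | hcase
  · have hu1 : u ≤ 1 := by nlinarith
    rw [min_eq_right hu1]
    have := le_two_log ht0 hcase
    have hlog0 : 0 ≤ Real.log (1 + t) := Real.log_nonneg (by linarith)
    nlinarith
  · have hmin : min 1 u ≤ 1 := min_le_left _ _
    have hmin0 : 0 ≤ min 1 u := le_min (by norm_num) hu
    have hlog : Real.log 2 ≤ Real.log (1 + t) := by
      apply Real.log_le_log (by norm_num); linarith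
    have := half_le_log_two
    nlinarith

/-- Clipped potential bound with multiplicity: for symmetric positive definite `Z`,
`c > 0`, and integers `1 ≤ N ≤ H`,
`N·min(1, c·xᵀZ⁻¹x) ≤ 2H·log (det (Z + N·c·xxᵀ) / det Z)`. -/
theorem clipped_potential_with_multiplicity
    (d : ℕ) (Z : Matrix (Fin d) (Fin d) ℝ) (hZ : Z.PosDef)
    (c : ℝ) (hc : 0 < c) (x : Fin d → ℝ)
    (N H : ℕ) (hN : 1 ≤ N) (hNH : N ≤ H) :
    (N : ℝ) * min 1 (c * (x ⬝ᵥ Z⁻¹.mulVec x))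
      ≤ 2 * (H : ℝ) *
          Real.log ((Z + ((N : ℝ) * c) • Matrix.vecMulVec x x).det / Z.det) := by
  have hq : 0 ≤ x ⬝ᵥ Z⁻¹.mulVec x := by simpa using (hZ.inv.posSemidef).dotProduct_mulVec_nonneg x
  have hdet : 0 < Z.det := hZ.det_pos
  have hkey : (Z + ((N : ℝ) * c) • Matrix.vecMulVec x x).det
      = Z.det * (1 + (N : ℝ) * (c * (x ⬝ᵥ Z⁻¹.mulVec x))) := by
    have hsmul : ((N : ℝ) * c) • Matrix.vecMulVec x x
        = replicateCol Unit (((N : ℝ) * c) • x) * replicateRow Unit x := by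
      rw [← vecMulVec_eq]
      ext i j
      simp [vecMulVec_apply, mul_assoc]
    rw [hsmul, det_add_replicateCol_mul_replicateRow hdet.ne'.isUnit]
    congr 1
    rw [det_unique]
    simp [Matrix.mul_apply, dotProduct, Matrix.mulVec, Finset.mul_sum, Finset.sum_mul]
    rw [Finset.sum_comm]
    apply Finset.sum_congr rfl; intro i _
    apply Finset.sum_congr rfl; intro j _
    ring
  rw [hkey, mul_comm Z.det, mul_div_assoc, div_self hdet.ne', mul_one]
  have hu : 0 ≤ c * (x ⬝ᵥ Z⁻¹.mulVec x) := by positivity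
  exact scalar_bound hu (by exact_mod_cast hN) (by exact_mod_cast hNH)
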